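/- arXiv:2412.09740 — 2 statements merged into one kernel-verified Lean document; each statement's English description precedes it below -/
import Mathlib

section
/- Let T_x and T_y be finite sets of real numbers (timestamps). Define S_(x,y) as the set of pairs (t, n(t)) for t in T_x, where n(t) is a nearest element of T_y to t, and define S_(y,x) symmetrically. Let A = { (t_x, t_y) : (t_x, t_y) ∈ S_(x,y) and (t_y, t_x) ∈ S_(y,x) } (mutual nearest-neighbor pairs). Then for every set of pairs Ã ⊆ T_x × T_y with |Ã| ≥ |A|, and for every pair (a, b) ∈ Ã, there exists a pair (t_x, t_y) ∈ A with |t_x − t_y| ≤ |a − b|. -/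
/-- mutual nearest-neighbor alignment guarantee (Theorem 1 of the paper). -/
theorem stmt_0 (Tx Ty : Finset ℝ) (hTx : Tx.Nonempty) (hTy : Ty.Nonempty)
    (ny nx : ℝ → ℝ)
    (hny : ∀ t ∈ Tx, ny t ∈ Ty ∧ ∀ s ∈ Ty, |t - ny t| ≤ |t - s|)
    (hnx : ∀ s ∈ Ty, nx s ∈ Tx ∧ ∀ t ∈ Tx, |nx s - s| ≤ |t - s|)
    (A : Finset (ℝ × ℝ))
    (hA : A = (Tx ×ˢ Ty).filter (fun p => ny p.1 = p.2 ∧ nx p.2 = p.1))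
    (At : Finset (ℝ × ℝ)) (hAt : At ⊆ Tx ×ˢ Ty) (hcard : A.card ≤ At.card) :
    ∀ p ∈ At, ∃ q ∈ A, |q.1 - q.2| ≤ |p.1 - p.2| := by
  intro p hp
  by_contra hcon
  push_neg at hcon
  have hpmem : p ∈ Tx ×ˢ Ty := hAt hp
  obtain ⟨hp1, hp2⟩ := Finset.mem_product.mp hpmem
  -- the minimum distance over all pairs
  set D := (Tx ×ˢ Ty).image (fun q => |q.1 - q.2|) with hD
  have hDne : D.Nonempty := ⟨|p.1 - p.2|, Finset.mem_image_of_mem _ hpmem⟩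
  set d := D.min' hDne with hd
  have hdle : ∀ t ∈ Tx, ∀ s ∈ Ty, d ≤ |t - s| := by
    intro t ht s hs
    have : (t, s) ∈ Tx ×ˢ Ty := Finset.mem_product.mpr ⟨ht, hs⟩
    exact Finset.min'_le D _ (Finset.mem_image_of_mem _ this)
  obtain ⟨q0, hq0mem, hq0⟩ := Finset.mem_image.mp (D.min'_mem hDne)
  obtain ⟨ha, hb⟩ := Finset.mem_product.mp hq0mem
  have hdp : d ≤ |p.1 - p.2| := hdle _ hp1 _ hp2
  -- no mutual pair whose distance is d
  have hnomut : ∀ t ∈ Tx, |t - ny t| = d → nx (ny t) ≠ t := by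
    intro t ht hdist heq
    have hsy : ny t ∈ Ty := (hny t ht).1
    have hmem : (t, ny t) ∈ A := by
      rw [hA, Finset.mem_filter, Finset.mem_product]
      exact ⟨⟨ht, hsy⟩, rfl, heq⟩
    have hlt := hcon _ hmem
    simp only at hlt
    rw [hdist] at hlt
    linarith
  -- the starting point
  have h0 : |q0.1 - ny q0.1| = d := by
    have h1 : |q0.1 - ny q0.1| ≤ |q0.1 - q0.2| := (hny _ ha).2 _ hb
    exact le_antisymm (h1.trans hq0.le) (hdle _ ha _ (hny _ ha).1)
  -- one step of the chain
  have step : ∀ t ∈ Tx, |t - ny t| = d →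
      nx (ny t) ∈ Tx ∧ nx (ny t) = t + 2 * (ny t - t) ∧
      ny (nx (ny t)) - nx (ny t) = ny t - t ∧
      |nx (ny t) - ny (nx (ny t))| = d := by
    intro t ht htd
    set s := ny t with hs_def
    have hs : s ∈ Ty := (hny t ht).1
    set t' := nx s with ht'_def
    have ht' : t' ∈ Tx := (hnx s hs).1
    have h2 : |t' - s| = d := by
      have h1 : |t' - s| ≤ |t - s| := (hnx s hs).2 t ht
      exact le_antisymm (h1.trans htd.le) (hdle _ ht' _ hs)
    have hne : t' ≠ t := hnomut t ht htd
    have h3 : t' - s = -(t - s) := by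
      rcases abs_eq_abs.mp (h2.trans htd.symm) with h | h
      · exfalso; apply hne; linarith
      · exact h
    have ht'val : t' = t + 2 * (s - t) := by linarith
    set s' := ny t' with hs'_def
    have hs' : s' ∈ Ty := (hny t' ht').1
    have h4 : |t' - s'| = d := by
      have h1 : |t' - s'| ≤ |t' - s| := (hny t' ht').2 s hs
      exact le_antisymm (h1.trans h2.le) (hdle _ ht' _ hs')
    have hsne : s' ≠ s := by
      intro heq
      exact hnomut t' ht' h4 (by rw [← hs'_def, heq, ← ht'_def])
    have h5 : t' - s' = -(t' - s) := by
      rcases abs_eq_abs.mp (h4.trans h2.symm) with h | h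
      · exfalso; apply hsne; linarith
      · exact h
    exact ⟨ht', ht'val, by linarith, h4⟩
  -- the drift e is nonzero
  set e := ny q0.1 - q0.1 with he
  have hene : e ≠ 0 := by
    intro h
    obtain ⟨_, hval, _, _⟩ := step q0.1 ha h0
    exact hnomut q0.1 ha h0 (by rw [hval, ← he, h]; ring)
  -- the chain marches off to infinity inside Tx
  have key : ∀ n : ℕ, ∃ t ∈ Tx, ny t - t = e ∧ |t - ny t| = d ∧
      t = q0.1 + n * (2 * e) := by
    intro n
    induction n with
    | zero => exact ⟨q0.1, ha, rfl, h0, by push_cast; ring⟩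
    | succ n ih =>
      obtain ⟨t, ht, hte, htd, htv⟩ := ih
      obtain ⟨ht', hval, hpres, hd'⟩ := step t ht htd
      refine ⟨nx (ny t), ht', by rw [hpres, hte], hd', ?_⟩
      rw [hval, hte, htv]; push_cast; ring
  have hinj : Function.Injective (fun n : ℕ => q0.1 + n * (2 * e)) := by
    intro m n h
    simp only at h
    have : (m : ℝ) = n := by
      have h2 : (m : ℝ) * (2 * e) = n * (2 * e) := by linarith
      exact mul_right_cancel₀ (mul_ne_zero two_ne_zero hene) h2
    exact_mod_cast this
  have hmem : ∀ n : ℕ, (fun n : ℕ => q0.1 + n * (2 * e)) n ∈ (Tx : Set ℝ) := by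
    intro n
    obtain ⟨t, ht, _, _, htv⟩ := key n
    simpa [← htv] using ht
  exact (Tx.finite_toSet).not_infinite
    (Set.infinite_of_injective_forall_mem hinj hmem)
end

section
/- Given finitely many pairs (t_{x,i}, t_{y,i}) in the mutual-nearest-neighbor alignment A of finite real sets T_x and T_y, the alignment is order-preserving: if (t, s) ∈ A and (t', s') ∈ A with t < t', then s ≤ s'. -/
/-- the mutual nearest-neighbor alignment (with unique nearest
neighbors) is order-preserving: matched pairs cannot cross. -/
theorem stmt_17 (Tx Ty : Finset ℝ) (f g : ℝ → ℝ)
    (hf : ∀ t ∈ Tx, f t ∈ Ty ∧ ∀ s' ∈ Ty, s' ≠ f t → |t - f t| < |t - s'|)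
    (hg : ∀ s ∈ Ty, g s ∈ Tx ∧ ∀ t' ∈ Tx, t' ≠ g s → |g s - s| < |t' - s|)
    (t s t' s' : ℝ) (ht : t ∈ Tx) (hs : s ∈ Ty) (ht' : t' ∈ Tx) (hs' : s' ∈ Ty)
    (h1 : f t = s ∧ g s = t) (h2 : f t' = s' ∧ g s' = t')
    (hlt : t < t') : s ≤ s' := by
  by_contra hcon
  push_neg at hcon
  have hne : s' ≠ s := ne_of_lt hcon
  have hA : |t - s| < |t - s'| := by
    have := (hf t ht).2 s' hs' (by rw [h1.1]; exact hne)
    rwa [h1.1] at this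
  have hB : |t' - s'| < |t' - s| := by
    have := (hf t' ht').2 s hs (by rw [h2.1]; exact hne.symm)
    rwa [h2.1] at this
  -- rearrangement: with t < t', s' < s, |t - s'| + |t' - s| ≤ |t - s| + |t' - s'|
  rcases abs_cases (t - s) with ⟨e1, _⟩ | ⟨e1, _⟩ <;>
  rcases abs_cases (t - s') with ⟨e2, _⟩ | ⟨e2, _⟩ <;>
  rcases abs_cases (t' - s) with ⟨e3, _⟩ | ⟨e3, _⟩ <;>
  rcases abs_cases (t' - s') with ⟨e4, _⟩ | ⟨e4, _⟩ <;>
  linarith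
end
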